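/- Bypass exclusion on one path: Let P1 = (v1 = u, v2, ..., v_m = root) and P2 be two internally vertex-disjoint paths from u to root. Suppose there is a path P3 from v_i ∈ P1 to v_j ∈ P1 (i < j) whose only common vertices with P1 ∪ P2 are v_i and v_j. Then no vertex v_k of P1 with i < k < j belongs to any double-vertex dominator of u. -/

import Mathlib

/-- A nonempty directed path `p` from `a` to `b` in the graph with edge relation `E`. -/
def IsPath {V : Type*} (E : V → V → Prop) (p : List V) (a b : V) : Prop :=
  p ≠ [] ∧ p.head? = some a ∧ p.getLast? = some b ∧ p.Chain' E

/-- `A` dominates `B` with respect to `root`: every path from a vertex of `B` to `root`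
contains a vertex of `A`. -/
def Dominates {V : Type*} (E : V → V → Prop) (root : V) (A B : Set V) : Prop :=
  ∀ b ∈ B, ∀ p : List V, IsPath E p b root → ∃ a ∈ A, a ∈ p

/-- `A` is a dominator of `B`: it dominates `B` and no proper subset `A \ {v}` does. -/
def IsDominator {V : Type*} (E : V → V → Prop) (root : V) (A B : Set V) : Prop :=
  Dominates E root A B ∧ ∀ v ∈ A, ¬ Dominates E root (A \ {v}) B

/-- `{v, w}` is a double-vertex dominator of `u`. -/
def DoubleDom {V : Type*} (E : V → V → Prop) (root : V) (u v w : V) : Prop :=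
  v ≠ w ∧ Dominates E root {v, w} {u} ∧
    ¬ Dominates E root {v} {u} ∧ ¬ Dominates E root {w} {u}

/-- The edge relation `E` is acyclic. -/
def Acyclic {V : Type*} (E : V → V → Prop) : Prop :=
  ∀ a b, E a b → ¬ Relation.ReflTransGen E b a

section Aux

variable {V : Type*} {E : V → V → Prop}

lemma chain'_transGen {l : List V} (h : l.Chain' E) :
    ∀ {s t : ℕ} (hs : s < t) (ht : t < l.length),
      Relation.TransGen E (l.get ⟨s, hs.trans ht⟩) (l.get ⟨t, ht⟩) := by
  intro s t
  induction t with
  | zero => omega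
  | succ t ih =>
    intro hs ht
    have hedge : E (l.get ⟨t, by omega⟩) (l.get ⟨t + 1, ht⟩) :=
      List.isChain_iff_getElem.mp h t (by omega)
    rcases Nat.lt_or_ge s t with hst | hst
    · exact (ih hst (by omega)).tail hedge
    · have hst' : s = t := by omega
      subst hst'
      exact Relation.TransGen.single hedge

lemma chain'_nodup (hacyc : Acyclic E) {l : List V} (h : l.Chain' E) : l.Nodup := by
  rw [List.nodup_iff_injective_get]
  intro s t hst
  have key : ∀ a b : Fin l.length, (a : ℕ) < (b : ℕ) → l.get a = l.get b → False := by
    intro a b hab heq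
    have htg := chain'_transGen h hab b.isLt
    simp only [Fin.eta] at htg
    rw [heq] at htg
    rcases Relation.TransGen.head'_iff.mp htg with ⟨c, hxc, hcx⟩
    exact hacyc _ _ hxc hcx
  rcases lt_trichotomy (s : ℕ) (t : ℕ) with hc | hc | hc
  · exact absurd hst (fun hh => key s t hc hh)
  · exact Fin.ext hc
  · exact absurd hst.symm (fun hh => key t s hc hh)

/-- Concatenation of paths sharing an endpoint. -/
lemma isPath_trans {p q : List V} {a b c : V}
    (hp : IsPath E p a b) (hq : IsPath E q b c) : IsPath E (p ++ q.tail) a c := by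
  obtain ⟨hpne, hph, hpl, hpc⟩ := hp
  obtain ⟨hqne, hqh, hql, hqc⟩ := hq
  have hqhead : q.head hqne = b := by
    rw [List.head?_eq_head hqne] at hqh
    exact Option.some_injective _ hqh
  have hq_cons : q = b :: q.tail := by
    conv_lhs => rw [← List.cons_head_tail hqne]
    rw [hqhead]
  refine ⟨by simp [hpne], ?_, ?_, ?_⟩
  · rw [List.head?_append_of_ne_nil _ hpne]
    exact hph
  · by_cases ht : q.tail = []
    · have hbc : b = c := by
        rw [hq_cons, ht] at hql
        simpa using hql
      rw [ht]
      simpa [hbc] using hpl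
    · have h1 : q.getLast? = q.tail.getLast? := by
        conv_lhs => rw [hq_cons]
        rw [← List.singleton_append]
        exact List.getLast?_append_of_ne_nil _ ht
      rw [List.getLast?_append_of_ne_nil _ ht, ← h1]
      exact hql
  · refine hpc.append ?_ ?_
    · rw [hq_cons] at hqc
      exact hqc.tail
    · intro x hx y hy
      rw [Option.mem_def, hpl] at hx
      have hxb : x = b := by injection hx.symm
      subst hxb
      rw [hq_cons] at hqc
      exact (List.isChain_cons.mp hqc).1 y hy

end Aux

theorem bypass_exclusion {V : Type*} [Fintype V] (E : V → V → Prop) (root : V)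
    (hacyc : Acyclic E) (u : V) (p₁ p₂ : List V)
    (h₁ : IsPath E p₁ u root) (h₂ : IsPath E p₂ u root)
    (hdisj : ∀ x, x ∈ p₁ → x ∈ p₂ → x = u ∨ x = root)
    (i j : Fin p₁.length) (hij : i < j) (p₃ : List V)
    (h₃ : IsPath E p₃ (p₁.get i) (p₁.get j))
    (h₃disj : ∀ x ∈ p₃, (x ∈ p₁ ∨ x ∈ p₂) → x = p₁.get i ∨ x = p₁.get j) :
    ∀ k : Fin p₁.length, i < k → k < j →
      ∀ w, ¬ DoubleDom E root u (p₁.get k) w := by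
  intro k hik hkj w hdd
  obtain ⟨hvw, hdom, hv, hw⟩ := hdd
  obtain ⟨hp₁ne, hp₁h, hp₁l, hp₁c⟩ := h₁
  set v := p₁.get k with hvdef
  have nodup₁ : p₁.Nodup := chain'_nodup hacyc hp₁c
  have hinj := List.nodup_iff_injective_get.mp nodup₁
  have hlen : 0 < p₁.length := k.pos
  have hik' : (i : ℕ) < (k : ℕ) := hik
  have hkj' : (k : ℕ) < (j : ℕ) := hkj
  -- u and root as entries of p₁
  have hu0 : p₁.get ⟨0, hlen⟩ = u := by
    have h1 : p₁.head hp₁ne = u := by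
      rw [List.head?_eq_head hp₁ne] at hp₁h
      exact Option.some_injective _ hp₁h
    rw [List.get_eq_getElem, ← List.head_eq_getElem_zero hp₁ne]
    exact h1
  have hrootlast : p₁.get ⟨p₁.length - 1, by omega⟩ = root := by
    have h1 : p₁.getLast hp₁ne = root := by
      rw [List.getLast?_eq_getLast_of_ne_nil hp₁ne] at hp₁l
      exact Option.some_injective _ hp₁l
    rw [List.get_eq_getElem, ← List.getLast_eq_getElem hp₁ne]
    exact h1
  -- v is an internal vertex of p₁
  have hvu : v ≠ u := by
    intro h
    have h2 : k = (⟨0, hlen⟩ : Fin p₁.length) := hinj (by rw [← hvdef, h, hu0])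
    have : (k : ℕ) = 0 := congrArg Fin.val h2
    omega
  have hvroot : v ≠ root := by
    intro h
    have h2 : k = (⟨p₁.length - 1, by omega⟩ : Fin p₁.length) :=
      hinj (by rw [← hvdef, h, hrootlast])
    have h3 : (k : ℕ) = p₁.length - 1 := congrArg Fin.val h2
    have := j.isLt
    omega
  have hvp₂ : v ∉ p₂ := by
    intro hm
    rcases hdisj v (List.get_mem p₁ k) hm with h | h
    · exact hvu h
    · exact hvroot h
  have hvp₃ : v ∉ p₃ := by
    intro hm
    rcases h₃disj v hm (Or.inl (List.get_mem p₁ k)) with h | h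
    · have h2 : k = i := hinj h
      omega
    · have h2 : k = j := hinj h
      omega
  -- w lies on p₂
  have hwp₂ : w ∈ p₂ := by
    rcases hdom u rfl p₂ h₂ with ⟨a, ha, hap⟩
    rcases ha with ha | ha
    · exact absurd (ha ▸ hap) hvp₂
    · rw [Set.mem_singleton_iff] at ha
      exact ha ▸ hap
  -- the bypass path q
  have hpath_a : IsPath E (p₁.take ((i : ℕ) + 1)) u (p₁.get i) := by
    have hlt : (i : ℕ) + 1 ≤ p₁.length := i.isLt
    have hlent : (p₁.take ((i : ℕ) + 1)).length = (i : ℕ) + 1 := by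
      rw [List.length_take]; omega
    refine ⟨?_, ?_, ?_, hp₁c.take _⟩
    · intro h; rw [h] at hlent; simp at hlent
    · rw [List.head?_eq_getElem?, List.getElem?_take_of_lt (by omega : 0 < (i : ℕ) + 1),
        ← List.head?_eq_getElem?]
      exact hp₁h
    · rw [List.getLast?_eq_getElem?, hlent]
      simp only [Nat.add_sub_cancel]
      rw [List.getElem?_take_of_lt (by omega : (i : ℕ) < (i : ℕ) + 1)]
      rw [List.getElem?_eq_getElem i.isLt]
      rfl
  have hpath_c : IsPath E (p₁.drop (j : ℕ)) (p₁.get j) root := by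
    have hlt : (j : ℕ) < p₁.length := j.isLt
    have hne : p₁.drop (j : ℕ) ≠ [] := by
      intro h
      have := (List.length_drop (i := (j : ℕ)) (l := p₁)) ▸ congrArg List.length h
      simp at this; omega
    refine ⟨hne, ?_, ?_, hp₁c.drop _⟩
    · rw [List.head?_eq_getElem?, List.getElem?_drop]
      simp only [Nat.add_zero]
      rw [List.getElem?_eq_getElem hlt]
      rfl
    · conv_rhs => rw [← hp₁l]
      conv_rhs => rw [← List.take_append_drop (j : ℕ) p₁]
      rw [List.getLast?_append_of_ne_nil _ hne]
  have hq := isPath_trans (isPath_trans hpath_a h₃) hpath_c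
  set q := (p₁.take ((i : ℕ) + 1) ++ p₃.tail) ++ (p₁.drop (j : ℕ)).tail with hqdef
  -- v does not lie on q
  have hvq : v ∉ q := by
    intro hm
    rw [hqdef] at hm
    rcases List.mem_append.mp hm with hm | hm
    · rcases List.mem_append.mp hm with hm | hm
      · -- v in take (i+1); but v = get k with k ≥ i+1 is in drop (i+1)
        have hvdrop : v ∈ p₁.drop ((i : ℕ) + 1) := by
          have hidx : (k : ℕ) - ((i : ℕ) + 1) < (p₁.drop ((i : ℕ) + 1)).length := by
            rw [List.length_drop]; have := k.isLt; omega
          have : (p₁.drop ((i : ℕ) + 1))[(k : ℕ) - ((i : ℕ) + 1)] = v := by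
            rw [List.getElem_drop]
            have : (i : ℕ) + 1 + ((k : ℕ) - ((i : ℕ) + 1)) = (k : ℕ) := by omega
            simp_rw [this]
            rfl
          exact this ▸ List.getElem_mem hidx
        exact List.disjoint_take_drop nodup₁ (le_refl ((i : ℕ) + 1)) hm hvdrop
      · exact hvp₃ (List.mem_of_mem_tail hm)
    · rw [List.tail_drop] at hm
      have hvtake : v ∈ p₁.take ((j : ℕ) + 1) := by
        have hidx : (k : ℕ) < (p₁.take ((j : ℕ) + 1)).length := by
          rw [List.length_take]; have := j.isLt; omega
        have : (p₁.take ((j : ℕ) + 1))[(k : ℕ)] = v := by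
          rw [List.getElem_take]; rfl
        exact this ▸ List.getElem_mem hidx
      exact List.disjoint_take_drop nodup₁ (le_refl ((j : ℕ) + 1)) hvtake hm
  -- w lies on q
  have hwq : w ∈ q := by
    rcases hdom u rfl q hq with ⟨a, ha, hap⟩
    rcases ha with ha | ha
    · exact absurd (ha ▸ hap) hvq
    · rw [Set.mem_singleton_iff] at ha
      exact ha ▸ hap
  -- hence w ∈ p₁ or w ∈ p₃
  have hwp₁₃ : w ∈ p₁ ∨ w ∈ p₃ := by
    rw [hqdef] at hwq
    rcases List.mem_append.mp hwq with hm | hm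
    · rcases List.mem_append.mp hm with hm | hm
      · exact Or.inl (List.mem_of_mem_take hm)
      · exact Or.inr (List.mem_of_mem_tail hm)
    · exact Or.inl (List.mem_of_mem_drop (List.mem_of_mem_tail hm))
  have hwp₁ : w ∈ p₁ := by
    rcases hwp₁₃ with hm | hm
    · exact hm
    · rcases h₃disj w hm (Or.inr hwp₂) with h | h
      · exact h ▸ List.get_mem p₁ i
      · exact h ▸ List.get_mem p₁ j
  -- so w = u or w = root, and each singleton trivially dominates {u}
  rcases hdisj w hwp₁ hwp₂ with hwu | hwroot
  · apply hw
    intro b hb p hp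
    rw [Set.mem_singleton_iff] at hb
    subst hb
    obtain ⟨hpne, hph, _, _⟩ := hp
    refine ⟨w, rfl, ?_⟩
    have : p.head hpne = b := by
      rw [List.head?_eq_head hpne] at hph
      exact Option.some_injective _ hph
    rw [hwu, ← this]
    exact List.head_mem hpne
  · apply hw
    intro b hb p hp
    rw [Set.mem_singleton_iff] at hb
    subst hb
    obtain ⟨hpne, _, hpl, _⟩ := hp
    refine ⟨w, rfl, ?_⟩
    have : p.getLast hpne = root := by
      rw [List.getLast?_eq_getLast_of_ne_nil hpne] at hpl
      exact Option.some_injective _ hpl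
    rw [hwroot, ← this]
    exact List.getLast_mem hpne
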